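/- Let A = [[0,0,1,0,0],[0,0,0,b,tc],[0,0,0,c,−tb],[0,0,0,0,s],[0,0,0,0,0]] with b,c,s,t ≥ 0, s²+t²=1, b²+c²=1, and b c s t ≠ 0. Then W(A) is not a circular disk centered at 0; in particular, the maximum eigenvalue of Re(A) differs from the maximum eigenvalue of Im(A). -/

import Mathlib

open Matrix

/-- The numerical range of a matrix: `{⟨Ax, x⟩ : ‖x‖ = 1}`. -/
noncomputable def numRange {n : ℕ} (A : Matrix (Fin n) (Fin n) ℂ) : Set ℂ :=
  {z | ∃ x : EuclideanSpace ℂ (Fin n), ‖x‖ = 1 ∧ (inner ℂ x (Matrix.toEuclideanLin A x) : ℂ) = z}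

/-- The largest real eigenvalue of a matrix. -/
noncomputable def maxEig {n : ℕ} (M : Matrix (Fin n) (Fin n) ℂ) : ℝ :=
  sSup {r : ℝ | (r : ℂ) ∈ spectrum ℂ M}

namespace NRaux

open Complex

lemma mem_spectrum_iff_det {n : ℕ} (M : Matrix (Fin n) (Fin n) ℂ) (z : ℂ) :
    z ∈ spectrum ℂ M ↔ det (z • (1 : Matrix (Fin n) (Fin n) ℂ) - M) = 0 := by
  rw [spectrum.mem_iff, Algebra.algebraMap_eq_smul_one, Matrix.isUnit_iff_isUnit_det,
    isUnit_iff_ne_zero, not_not]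

lemma det_char_hermitian {n : ℕ} {M : Matrix (Fin n) (Fin n) ℂ} (hM : M.IsHermitian) (z : ℂ) :
    det (z • (1 : Matrix (Fin n) (Fin n) ℂ) - M) = ∏ i, (z - (hM.eigenvalues i : ℂ)) := by
  set U : Matrix (Fin n) (Fin n) ℂ := (hM.eigenvectorUnitary : Matrix (Fin n) (Fin n) ℂ) with hUdef
  have hU : U * star U = 1 := ((Unitary.mem_iff).1 hM.eigenvectorUnitary.2).2
  have hU' : star U * U = 1 := ((Unitary.mem_iff).1 hM.eigenvectorUnitary.2).1
  have key : z • (1 : Matrix (Fin n) (Fin n) ℂ) - M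
      = U * (z • 1 - diagonal (RCLike.ofReal ∘ hM.eigenvalues)) * star U := by
    conv_lhs => rw [hM.spectral_theorem]
    rw [Matrix.mul_sub, Matrix.sub_mul]
    congr 1
    rw [Matrix.mul_smul, Matrix.mul_one, Matrix.smul_mul, hU]
  have hdiag : z • (1 : Matrix (Fin n) (Fin n) ℂ) - diagonal (RCLike.ofReal ∘ hM.eigenvalues)
      = diagonal (fun i => z - (hM.eigenvalues i : ℂ)) := by
    rw [smul_one_eq_diagonal, diagonal_sub]
    rfl
  rw [key, det_mul, det_mul, mul_comm, ← mul_assoc, ← det_mul, hU', det_one, one_mul,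
    hdiag, det_diagonal]

lemma spectrum_real_eq {n : ℕ} {M : Matrix (Fin n) (Fin n) ℂ} (hM : M.IsHermitian) :
    {r : ℝ | (r : ℂ) ∈ spectrum ℂ M} = Set.range hM.eigenvalues := by
  ext r
  rw [Set.mem_setOf_eq, mem_spectrum_iff_det, det_char_hermitian hM, Finset.prod_eq_zero_iff]
  constructor
  · rintro ⟨i, -, hi⟩
    exact ⟨i, by exact_mod_cast (sub_eq_zero.mp hi).symm⟩
  · rintro ⟨i, hi⟩
    exact ⟨i, Finset.mem_univ i, by rw [sub_eq_zero]; exact_mod_cast hi.symm⟩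

lemma maxEig_mem {n : ℕ} [NeZero n] {M : Matrix (Fin n) (Fin n) ℂ} (hM : M.IsHermitian) :
    maxEig M ∈ Set.range hM.eigenvalues := by
  rw [maxEig, spectrum_real_eq hM]
  exact Set.Nonempty.csSup_mem (Set.range_nonempty _) (Set.finite_range _)

lemma coe_maxEig_mem {n : ℕ} [NeZero n] {M : Matrix (Fin n) (Fin n) ℂ} (hM : M.IsHermitian) :
    ((maxEig M : ℝ) : ℂ) ∈ spectrum ℂ M := by
  have h : maxEig M ∈ {r : ℝ | (r : ℂ) ∈ spectrum ℂ M} := by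
    rw [spectrum_real_eq hM]; exact maxEig_mem hM
  exact h

lemma le_maxEig {n : ℕ} {M : Matrix (Fin n) (Fin n) ℂ} (hM : M.IsHermitian) (i : Fin n) :
    hM.eigenvalues i ≤ maxEig M := by
  rw [maxEig, spectrum_real_eq hM]
  exact le_csSup (Set.finite_range _).bddAbove ⟨i, rfl⟩

lemma eigen_apply {n : ℕ} {M : Matrix (Fin n) (Fin n) ℂ} (hM : M.IsHermitian) (i : Fin n) :
    toEuclideanLin M (hM.eigenvectorBasis i)
      = (hM.eigenvalues i : ℂ) • hM.eigenvectorBasis i := by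
  have h := hM.mulVec_eigenvectorBasis i
  ext j
  have h2 := congrFun h j
  simp only [Pi.smul_apply, real_smul] at h2
  simpa [toEuclideanLin_apply] using h2

lemma exists_rayleigh_max {n : ℕ} [NeZero n] {M : Matrix (Fin n) (Fin n) ℂ}
    (hM : M.IsHermitian) :
    ∃ x : EuclideanSpace ℂ (Fin n), ‖x‖ = 1 ∧ inner ℂ x (toEuclideanLin M x) = (maxEig M : ℂ) := by
  obtain ⟨i, hi⟩ := maxEig_mem hM
  refine ⟨hM.eigenvectorBasis i, hM.eigenvectorBasis.orthonormal.1 i, ?_⟩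
  rw [eigen_apply hM i, inner_smul_right, inner_self_eq_norm_sq_to_K,
    hM.eigenvectorBasis.orthonormal.1 i, hi]
  norm_num

lemma rayleigh_le {n : ℕ} {M : Matrix (Fin n) (Fin n) ℂ} (hM : M.IsHermitian)
    (x : EuclideanSpace ℂ (Fin n)) (hx : ‖x‖ = 1) :
    (inner ℂ x (toEuclideanLin M x) : ℂ).re ≤ maxEig M := by
  set b := hM.eigenvectorBasis with hb
  set c : EuclideanSpace ℂ (Fin n) := b.repr x with hc
  have hrepr : b.repr (toEuclideanLin M x) = fun i => (hM.eigenvalues i : ℂ) * c i := by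
    funext i
    rw [hc, OrthonormalBasis.repr_apply_apply, OrthonormalBasis.repr_apply_apply]
    have hsym := (isHermitian_iff_isSymmetric.1 hM)
    rw [← hsym (b i) x, eigen_apply hM i, inner_smul_left]
    simp [Complex.conj_ofReal, hb]
  have hinner : (inner ℂ x (toEuclideanLin M x) : ℂ)
      = ∑ i, (hM.eigenvalues i : ℂ) * ((starRingEnd ℂ) (c i) * c i) := by
    rw [← b.repr.inner_map_map x (toEuclideanLin M x)]
    rw [← hc]
    simp only [PiLp.inner_apply, RCLike.inner_apply, hrepr]
    exact Finset.sum_congr rfl fun i _ => by ring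
  have hre : (inner ℂ x (toEuclideanLin M x) : ℂ).re
      = ∑ i, hM.eigenvalues i * Complex.normSq (c i) := by
    rw [hinner, Complex.re_sum]
    refine Finset.sum_congr rfl fun i _ => ?_
    rw [mul_comm ((starRingEnd ℂ) (c i)) (c i), Complex.mul_conj]
    norm_num
  have hsum : ∑ i, Complex.normSq (c i) = 1 := by
    have hnc : ‖c‖ = 1 := by rw [hc, LinearIsometryEquiv.norm_map]; exact hx
    have h1 : ‖c‖ = Real.sqrt (∑ i, ‖c i‖ ^ 2) := EuclideanSpace.norm_eq c
    have h2 : (∑ i, ‖c i‖ ^ 2) = ∑ i, Complex.normSq (c i) := by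
      refine Finset.sum_congr rfl fun i _ => ?_
      rw [Complex.sq_norm]
    rw [hnc, h2] at h1
    have h3 : (0:ℝ) ≤ ∑ i, Complex.normSq (c i) :=
      Finset.sum_nonneg fun i _ => Complex.normSq_nonneg _
    nlinarith [Real.sq_sqrt h3]
  rw [hre]
  calc ∑ i, hM.eigenvalues i * Complex.normSq (c i)
      ≤ ∑ i, maxEig M * Complex.normSq (c i) :=
        Finset.sum_le_sum fun i _ =>
          mul_le_mul_of_nonneg_right (le_maxEig hM i) (Complex.normSq_nonneg _)
    _ = maxEig M := by rw [← Finset.mul_sum, hsum, mul_one]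

lemma inner_re {n : ℕ} (A : Matrix (Fin n) (Fin n) ℂ) (x : EuclideanSpace ℂ (Fin n)) :
    (inner ℂ x (toEuclideanLin ((1/2 : ℂ) • (A + Aᴴ)) x) : ℂ)
      = (((inner ℂ x (toEuclideanLin A x) : ℂ)).re : ℂ) := by
  rw [_root_.map_smul, _root_.map_add]
  simp only [LinearMap.smul_apply, LinearMap.add_apply, inner_smul_right, inner_add_right]
  rw [Matrix.toEuclideanLin_conjTranspose_eq_adjoint, LinearMap.adjoint_inner_right]
  set z := (inner ℂ x (toEuclideanLin A x) : ℂ) with hz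
  have hconj : (inner ℂ (toEuclideanLin A x) x : ℂ) = (starRingEnd ℂ) z := by
    rw [hz, ← inner_conj_symm]
  rw [hconj]
  have hac := Complex.add_conj z
  push_cast at hac
  linear_combination (1/2 : ℂ) * hac

lemma inner_im {n : ℕ} (A : Matrix (Fin n) (Fin n) ℂ) (x : EuclideanSpace ℂ (Fin n)) :
    (inner ℂ x (toEuclideanLin ((Complex.I/2) • (Aᴴ - A)) x) : ℂ)
      = (((inner ℂ x (toEuclideanLin A x) : ℂ)).im : ℂ) := by
  rw [_root_.map_smul, _root_.map_sub]
  simp only [LinearMap.smul_apply, LinearMap.sub_apply, inner_smul_right, inner_sub_right]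
  rw [Matrix.toEuclideanLin_conjTranspose_eq_adjoint, LinearMap.adjoint_inner_right]
  set z := (inner ℂ x (toEuclideanLin A x) : ℂ) with hz
  have hconj : (inner ℂ (toEuclideanLin A x) x : ℂ) = (starRingEnd ℂ) z := by
    rw [hz, ← inner_conj_symm]
  rw [hconj]
  have hsc := Complex.sub_conj z
  push_cast at hsc
  linear_combination (-(Complex.I)/2) * hsc - (z.im : ℂ) * Complex.I_sq

set_option maxHeartbeats 3000000 in
lemma det1 (B C S T z : ℂ) :
    det !![z, 0, -(1/2), 0, 0;
           0, z, 0, -(B/2), -(C*T/2);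
           -(1/2), 0, z, -(C/2), B*T/2;
           0, -(B/2), -(C/2), z, -(S/2);
           0, -(C*T/2), B*T/2, -(S/2), z] =
      z^5 + (-1/4)*z^3 + (-1/4)*S^2*z^3 + (-1/4)*C^2*z^3 + (-1/4)*C^2*T^2*z^3 + (-1/4)*B^2*z^3
        + (-1/4)*B^2*T^2*z^3 + (1/16)*S^2*z + (1/16)*C^2*T^2*z + (1/16)*C^4*T^2*z + (1/16)*B^2*z
        + (1/8)*B^2*C^2*T^2*z + (1/16)*B^4*T^2*z + (1/16)*B*C*S*T := by
  simp [det_succ_row_zero, Fin.sum_univ_succ, Fin.succAbove, Fin.castSucc,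
    Fin.castAdd, Fin.castLE, Matrix.cons_val_succ]
  ring

set_option maxHeartbeats 3000000 in
lemma det2 (B C S T z : ℂ) :
    det !![z, 0, I/2, 0, 0;
           0, z, 0, I*B/2, I*C*T/2;
           -I/2, 0, z, I*C/2, -(I*B*T)/2;
           0, -(I*B)/2, -(I*C)/2, z, I*S/2;
           0, -(I*C*T)/2, I*B*T/2, -(I*S)/2, z] =
      z^5 + (-1/4)*z^3 + (-1/4)*S^2*z^3 + (-1/4)*C^2*z^3 + (-1/4)*C^2*T^2*z^3 + (-1/4)*B^2*z^3
        + (-1/4)*B^2*T^2*z^3 + (1/16)*S^2*z + (1/16)*C^2*T^2*z + (1/16)*C^4*T^2*z + (1/16)*B^2*z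
        + (1/8)*B^2*C^2*T^2*z + (1/16)*B^4*T^2*z := by
  have h2 : I^2 = -1 := Complex.I_sq
  have h3 : I^3 = -I := by rw [pow_succ, h2]; ring
  have h4 : I^4 = 1 := by rw [pow_succ, h3]; simp [h2, Complex.I_mul_I]
  simp [det_succ_row_zero, Fin.sum_univ_succ, Fin.succAbove, Fin.castSucc,
    Fin.castAdd, Fin.castLE, Matrix.cons_val_succ]
  ring_nf
  simp only [h2, h3, h4]
  ring

end NRaux

open NRaux Complex

set_option maxHeartbeats 1000000

theorem numRange_5x5_not_circular (b c s t : ℝ)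
    (hb : 0 ≤ b) (hc : 0 ≤ c) (hs : 0 ≤ s) (ht : 0 ≤ t)
    (hst : s ^ 2 + t ^ 2 = 1) (hbc : b ^ 2 + c ^ 2 = 1)
    (h0 : b * c * s * t ≠ 0) :
    let A : Matrix (Fin 5) (Fin 5) ℂ :=
      !![0, 0, 1, 0, 0;
         0, 0, 0, (b : ℂ), ((t * c : ℝ) : ℂ);
         0, 0, 0, (c : ℂ), ((-(t * b) : ℝ) : ℂ);
         0, 0, 0, 0, (s : ℂ);
         0, 0, 0, 0, 0]
    (¬ ∃ r : ℝ, numRange A = Metric.closedBall (0 : ℂ) r) ∧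
      maxEig ((1 / 2 : ℂ) • (A + Aᴴ)) ≠ maxEig ((Complex.I / 2) • (Aᴴ - A)) := by
  intro A
  have hA : A = !![0, 0, 1, 0, 0;
         0, 0, 0, (b : ℂ), ((t * c : ℝ) : ℂ);
         0, 0, 0, (c : ℂ), ((-(t * b) : ℝ) : ℂ);
         0, 0, 0, 0, (s : ℂ);
         0, 0, 0, 0, 0] := rfl
  set M₁ : Matrix (Fin 5) (Fin 5) ℂ := (1 / 2 : ℂ) • (A + Aᴴ) with hM₁
  set M₂ : Matrix (Fin 5) (Fin 5) ℂ := (Complex.I / 2) • (Aᴴ - A) with hM₂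
  have hH1 : M₁.IsHermitian := by
    show M₁ᴴ = M₁
    rw [hM₁, conjTranspose_smul, conjTranspose_add, conjTranspose_conjTranspose]
    norm_num [add_comm]
  have hH2 : M₂.IsHermitian := by
    show M₂ᴴ = M₂
    rw [hM₂, conjTranspose_smul, conjTranspose_sub, conjTranspose_conjTranspose]
    simp [Complex.star_def, map_div₀]
    module
  have e1 : ∀ z : ℂ, z • (1 : Matrix (Fin 5) (Fin 5) ℂ) - M₁ =
      !![z, 0, -(1/2), 0, 0;
         0, z, 0, -((b:ℂ)/2), -((c:ℂ)*(t:ℂ)/2);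
         -(1/2), 0, z, -((c:ℂ)/2), (b:ℂ)*(t:ℂ)/2;
         0, -((b:ℂ)/2), -((c:ℂ)/2), z, -((s:ℂ)/2);
         0, -((c:ℂ)*(t:ℂ)/2), (b:ℂ)*(t:ℂ)/2, -((s:ℂ)/2), z] := by
    intro z
    ext i j
    fin_cases i <;> fin_cases j <;>
      simp [hM₁, hA, Matrix.one_apply, Matrix.conjTranspose_apply, Complex.star_def,
        Complex.conj_ofReal, Matrix.vecHead, Matrix.vecTail, Function.comp] <;>
      push_cast <;> ring
  have e2 : ∀ z : ℂ, z • (1 : Matrix (Fin 5) (Fin 5) ℂ) - M₂ =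
      !![z, 0, I/2, 0, 0;
         0, z, 0, I*(b:ℂ)/2, I*(c:ℂ)*(t:ℂ)/2;
         -I/2, 0, z, I*(c:ℂ)/2, -(I*(b:ℂ)*(t:ℂ))/2;
         0, -(I*(b:ℂ))/2, -(I*(c:ℂ))/2, z, I*(s:ℂ)/2;
         0, -(I*(c:ℂ)*(t:ℂ))/2, I*(b:ℂ)*(t:ℂ)/2, -(I*(s:ℂ))/2, z] := by
    intro z
    ext i j
    fin_cases i <;> fin_cases j <;>
      simp [hM₂, hA, Matrix.one_apply, Matrix.conjTranspose_apply, Complex.star_def,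
        Complex.conj_ofReal, Matrix.vecHead, Matrix.vecTail, Function.comp] <;>
      push_cast <;> ring
  set B : ℂ := (b : ℂ) with hBd
  set C : ℂ := (c : ℂ) with hCd
  set S : ℂ := (s : ℂ) with hSd
  set T : ℂ := (t : ℂ) with hTd
  have d1 : ∀ z : ℂ, det (z • (1 : Matrix (Fin 5) (Fin 5) ℂ) - M₁) =
      z^5 + (-1/4)*z^3 + (-1/4)*S^2*z^3 + (-1/4)*C^2*z^3 + (-1/4)*C^2*T^2*z^3 + (-1/4)*B^2*z^3
        + (-1/4)*B^2*T^2*z^3 + (1/16)*S^2*z + (1/16)*C^2*T^2*z + (1/16)*C^4*T^2*z + (1/16)*B^2*z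
        + (1/8)*B^2*C^2*T^2*z + (1/16)*B^4*T^2*z + (1/16)*B*C*S*T := by
    intro z
    rw [e1 z]
    have := det1 B C S T z
    convert this using 2 <;> ring
  have d2 : ∀ z : ℂ, det (z • (1 : Matrix (Fin 5) (Fin 5) ℂ) - M₂) =
      z^5 + (-1/4)*z^3 + (-1/4)*S^2*z^3 + (-1/4)*C^2*z^3 + (-1/4)*C^2*T^2*z^3 + (-1/4)*B^2*z^3
        + (-1/4)*B^2*T^2*z^3 + (1/16)*S^2*z + (1/16)*C^2*T^2*z + (1/16)*C^4*T^2*z + (1/16)*B^2*z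
        + (1/8)*B^2*C^2*T^2*z + (1/16)*B^4*T^2*z := by
    intro z
    rw [e2 z]
    exact det2 B C S T z
  have hne : maxEig M₁ ≠ maxEig M₂ := by
    intro hm
    have q1 : det (((maxEig M₁ : ℝ) : ℂ) • (1 : Matrix (Fin 5) (Fin 5) ℂ) - M₁) = 0 :=
      (mem_spectrum_iff_det _ _).1 (coe_maxEig_mem hH1)
    have q2 : det (((maxEig M₁ : ℝ) : ℂ) • (1 : Matrix (Fin 5) (Fin 5) ℂ) - M₂) = 0 := by
      rw [hm]
      exact (mem_spectrum_iff_det _ _).1 (coe_maxEig_mem hH2)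
    rw [d1] at q1
    rw [d2] at q2
    have hbz : B * C * S * T = 0 := by linear_combination 16 * q1 - 16 * q2
    rw [hBd, hCd, hSd, hTd] at hbz
    have : b * c * s * t = 0 := by exact_mod_cast hbz
    exact h0 this
  refine ⟨?_, hne⟩
  rintro ⟨r, hr⟩
  -- 0 ∈ numRange A, so 0 ≤ r
  have h0mem : (0 : ℂ) ∈ numRange A := by
    refine ⟨EuclideanSpace.single (0 : Fin 5) (1 : ℂ), by simp, ?_⟩
    have : (inner ℂ (EuclideanSpace.single (0 : Fin 5) (1 : ℂ))
        (toEuclideanLin A (EuclideanSpace.single (0 : Fin 5) (1 : ℂ))) : ℂ)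
        = (toEuclideanLin A (EuclideanSpace.single (0 : Fin 5) (1 : ℂ))) 0 := by
      rw [EuclideanSpace.inner_single_left]
      simp
    rw [this]
    show (A *ᵥ _) 0 = 0
    simp [hA, mulVec, dotProduct, Fin.sum_univ_five, EuclideanSpace.single_apply]
  have hr0 : (0 : ℝ) ≤ r := by
    rw [hr] at h0mem
    simpa using h0mem
  -- maxEig M₁ = r
  have key1 : maxEig M₁ = r := by
    apply le_antisymm
    · obtain ⟨v, hv1, hv2⟩ := exists_rayleigh_max hH1
      set z := (inner ℂ v (toEuclideanLin A v) : ℂ) with hz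
      have hmem : z ∈ numRange A := ⟨v, hv1, rfl⟩
      rw [hr, Metric.mem_closedBall, dist_zero_right] at hmem
      have hre : (z.re : ℂ) = (maxEig M₁ : ℂ) := by rw [← inner_re A v]; exact hv2
      have hre' : z.re = maxEig M₁ := by exact_mod_cast hre
      calc maxEig M₁ = z.re := hre'.symm
        _ ≤ ‖z‖ := Complex.re_le_norm z
        _ ≤ r := hmem
    · have hrmem : (r : ℂ) ∈ numRange A := by
        rw [hr, Metric.mem_closedBall, dist_zero_right]
        rw [Complex.norm_real]
        exact le_of_eq (_root_.abs_of_nonneg hr0)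
      obtain ⟨x, hx1, hx2⟩ := hrmem
      have := rayleigh_le hH1 x hx1
      rw [inner_re A x, hx2] at this
      simpa using this
  -- maxEig M₂ = r
  have key2 : maxEig M₂ = r := by
    apply le_antisymm
    · obtain ⟨v, hv1, hv2⟩ := exists_rayleigh_max hH2
      set z := (inner ℂ v (toEuclideanLin A v) : ℂ) with hz
      have hmem : z ∈ numRange A := ⟨v, hv1, rfl⟩
      rw [hr, Metric.mem_closedBall, dist_zero_right] at hmem
      have him : (z.im : ℂ) = (maxEig M₂ : ℂ) := by rw [← inner_im A v]; exact hv2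
      have him' : z.im = maxEig M₂ := by exact_mod_cast him
      calc maxEig M₂ = z.im := him'.symm
        _ ≤ |z.im| := le_abs_self _
        _ ≤ ‖z‖ := Complex.abs_im_le_norm z
        _ ≤ r := hmem
    · have hrmem : ((r : ℂ) * I) ∈ numRange A := by
        rw [hr, Metric.mem_closedBall, dist_zero_right]
        rw [norm_mul, Complex.norm_I, mul_one]
        rw [Complex.norm_real]
        exact le_of_eq (_root_.abs_of_nonneg hr0)
      obtain ⟨x, hx1, hx2⟩ := hrmem
      have := rayleigh_le hH2 x hx1
      rw [inner_im A x, hx2] at this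
      simpa using this
  exact hne (by rw [key1, key2])
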